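/- Let X, Y ∈ ℝ^{n×n} and define L(A) = XAY on ℝ^{n×n}. Then L is a bijection of the set of inverse nonnegative n×n matrices onto itself if and only if either X and Y are both monomial matrices or −X and −Y are both monomial matrices. -/

import Mathlib

def InvNonneg {n : ℕ} (M : Matrix (Fin n) (Fin n) ℝ) : Prop :=
  IsUnit M ∧ ∀ i j, 0 ≤ M⁻¹ i j

def Monomial {n : ℕ} (M : Matrix (Fin n) (Fin n) ℝ) : Prop :=
  (∀ i j, 0 ≤ M i j) ∧ (∀ i, ∃! j, M i j ≠ 0) ∧ (∀ j, ∃! i, M i j ≠ 0)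

open Matrix

lemma mulNonneg {n : ℕ} {A B : Matrix (Fin n) (Fin n) ℝ}
    (hA : ∀ i j, 0 ≤ A i j) (hB : ∀ i j, 0 ≤ B i j) : ∀ i j, 0 ≤ (A * B) i j := by
  intro i j
  rw [Matrix.mul_apply]
  exact Finset.sum_nonneg fun k _ => mul_nonneg (hA i k) (hB k j)

lemma mulNonpos {n : ℕ} {A B : Matrix (Fin n) (Fin n) ℝ}
    (hA : ∀ i j, A i j ≤ 0) (hB : ∀ i j, B i j ≤ 0) : ∀ i j, 0 ≤ (A * B) i j := by
  intro i j
  rw [Matrix.mul_apply]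
  exact Finset.sum_nonneg fun k _ => by nlinarith [hA i k, hB k j]

lemma monomial_of_nonneg_inv {n : ℕ} {M : Matrix (Fin n) (Fin n) ℝ}
    (hM : ∀ i j, 0 ≤ M i j) (hU : IsUnit M) (hI : ∀ i j, 0 ≤ M⁻¹ i j) :
    Monomial M := by
  have hdet : IsUnit M.det := (Matrix.isUnit_iff_isUnit_det M).mp hU
  have hinv : M⁻¹ * M = 1 := Matrix.nonsing_inv_mul M hdet
  -- for each j, find k with M⁻¹ j k > 0 and M k j > 0, and row k zero elsewhere
  have key : ∀ j : Fin n, ∃ k, 0 < M⁻¹ j k * M k j ∧ ∀ j', j' ≠ j → M k j' = 0 := by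
    intro j
    have h1 : ∑ k, M⁻¹ j k * M k j = 1 := by
      have := congrFun (congrFun hinv j) j
      simpa [Matrix.mul_apply, Matrix.one_apply] using this
    have h2 : ∃ k, 0 < M⁻¹ j k * M k j := by
      by_contra h
      push_neg at h
      have : (∑ k, M⁻¹ j k * M k j) ≤ 0 := Finset.sum_nonpos fun k _ => h k
      linarith
    obtain ⟨k, hk⟩ := h2
    refine ⟨k, hk, fun j' hj' => ?_⟩
    have h0 : ∑ a, M⁻¹ j a * M a j' = 0 := by
      have := congrFun (congrFun hinv j) j'
      simpa [Matrix.mul_apply, Matrix.one_apply, hj'.symm] using this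
    have hterm : M⁻¹ j k * M k j' = 0 := by
      have := (Finset.sum_eq_zero_iff_of_nonneg
        (fun a _ => mul_nonneg (hI j a) (hM a j'))).mp h0 k (Finset.mem_univ k)
      exact this
    have hkpos : 0 < M⁻¹ j k := by
      rcases lt_or_eq_of_le (hI j k) with h | h
      · exact h
      · exfalso; rw [← h] at hk; simp at hk
    have := mul_eq_zero.mp hterm
    rcases this with h | h
    · exfalso; exact hkpos.ne' h
    · exact h
  choose f hf hf0 using key
  have hfMpos : ∀ j, 0 < M (f j) j := by
    intro j
    rcases lt_or_eq_of_le (hM (f j) j) with h | h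
    · exact h
    · exfalso; have := hf j; rw [← h] at this; simp at this
  have hfinj : Function.Injective f := by
    intro j j' h
    by_contra hne
    have := hf0 j' j hne  -- M (f j') j = 0
    rw [← h] at this
    exact (hfMpos j).ne' this
  have hfsurj : Function.Surjective f := Finite.surjective_of_injective hfinj
  refine ⟨hM, ?_, ?_⟩
  · intro i
    obtain ⟨j, rfl⟩ := hfsurj i
    refine ⟨j, (hfMpos j).ne', fun j' hj' => ?_⟩
    by_contra hne
    exact hj' (hf0 j j' hne)
  · intro j
    refine ⟨f j, (hfMpos j).ne', fun i hi => ?_⟩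
    obtain ⟨j', rfl⟩ := hfsurj i
    have : j' = j := by
      by_contra hne
      exact hi (hf0 j' j (fun h => hne h.symm))
    rw [this]

lemma monomial_isUnit_inv {n : ℕ} {M : Matrix (Fin n) (Fin n) ℝ} (h : Monomial M) :
    IsUnit M ∧ (∀ i j, 0 ≤ M⁻¹ i j) := by
  obtain ⟨hpos, hrow, hcol⟩ := h
  choose f hf hfu using hrow
  have hfinj : Function.Injective f := by
    intro i k hik
    obtain ⟨r, hr, hru⟩ := hcol (f i)
    have h1 : i = r := hru i (hf i)
    have h2 : k = r := hru k (by rw [hik]; exact hf k)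
    rw [h1, h2]
  set N : Matrix (Fin n) (Fin n) ℝ := Matrix.of (fun a b => if f b = a then (M b (f b))⁻¹ else 0)
    with hN
  have hMN : M * N = 1 := by
    ext i k
    rw [Matrix.mul_apply]
    have hsum : ∀ j ∈ Finset.univ, j ≠ f k → M i j * N j k = 0 := by
      intro j _ hj
      have : N j k = 0 := by simp [hN, Ne.symm hj]
      rw [this, mul_zero]
    rw [Finset.sum_eq_single_of_mem (f k) (Finset.mem_univ _) hsum]
    by_cases hik : i = k
    · subst hik
      simp only [hN, Matrix.of_apply, if_pos rfl, Matrix.one_apply_eq]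
      exact mul_inv_cancel₀ (hf i)
    · have hMi : M i (f k) = 0 := by
        by_contra hc
        have : f k = f i := hfu i (f k) hc
        exact hik (hfinj (this.symm))
      simp [hMi, Matrix.one_apply, hik]
  have hU : IsUnit M := (Matrix.isUnit_iff_isUnit_det M).mpr (Matrix.isUnit_det_of_right_inverse hMN)
  have hinv : M⁻¹ = N := Matrix.inv_eq_right_inv hMN
  refine ⟨hU, ?_⟩
  intro a b
  rw [hinv]
  simp only [hN, Matrix.of_apply]
  split
  · exact inv_nonneg.mpr (hpos b (f b))
  · exact le_refl 0

lemma std_nonneg {n : ℕ} (i j : Fin n) (t : ℝ) (ht : 0 ≤ t) :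
    ∀ k l, 0 ≤ (1 + Matrix.single i j t) k l := by
  intro k l
  simp only [Matrix.add_apply, Matrix.one_apply, Matrix.single, Matrix.of_apply]
  split <;> split <;> simp_all <;> linarith

lemma std_isUnit {n : ℕ} (i j : Fin n) (t : ℝ) (ht : 0 ≤ t) :
    IsUnit (1 + Matrix.single i j t) := by
  by_cases hji : j = i
  · subst hji
    have h1t : (1 : ℝ) + t ≠ 0 := by linarith
    refine (Matrix.isUnit_iff_isUnit_det _).mpr (Matrix.isUnit_det_of_right_inverse
      (B := 1 + Matrix.single j j (-t / (1 + t))) ?_)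
    rw [add_mul, mul_add, mul_add, Matrix.one_mul, Matrix.mul_one, Matrix.one_mul,
      Matrix.single_mul_single_same]
    have : Matrix.single j j (-t / (1 + t)) + (Matrix.single j j t
        + Matrix.single j j (t * (-t / (1 + t)))) = 0 := by
      rw [← Matrix.single_add, ← Matrix.single_add]
      have : -t / (1 + t) + (t + t * (-t / (1 + t))) = 0 := by
        field_simp
        ring
      rw [this]
      ext a b
      simp [Matrix.single]
    rw [add_assoc, this, add_zero]
  · refine (Matrix.isUnit_iff_isUnit_det _).mpr (Matrix.isUnit_det_of_right_inverse (B := 1 + Matrix.single i j (-t)) ?_)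
    rw [add_mul, mul_add, mul_add, Matrix.one_mul, Matrix.mul_one, Matrix.one_mul,
      Matrix.single_mul_single_of_ne (c := t) i j i hji (-t)]
    rw [add_zero, add_assoc, ← Matrix.single_add]
    have h1 : -t + t = 0 := by ring
    rw [h1]
    have h0 : Matrix.single i j (0:ℝ) = 0 := by
      ext a b; simp [Matrix.single]
    rw [h0, add_zero]

lemma VEU {n : ℕ} (V U : Matrix (Fin n) (Fin n) ℝ) (i j k l : Fin n) (t : ℝ) :
    (V * (1 + Matrix.single i j t) * U) k l
      = (V * U) k l + t * (V k i * U j l) := by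
  rw [Matrix.mul_add, Matrix.mul_one, Matrix.add_mul, Matrix.add_apply]
  congr 1
  have h1 : ∀ b, (V * Matrix.single i j t) k b
      = if b = j then V k i * t else 0 := by
    intro b
    by_cases hb : b = j
    · subst hb; simp
    · simp [Matrix.mul_single_apply_of_ne, hb]
  rw [Matrix.mul_apply]
  simp only [h1, ite_mul, zero_mul]
  rw [Finset.sum_ite_eq' Finset.univ j (fun b => V k i * t * U b l)]
  simp [mul_comm, mul_assoc, mul_left_comm]

lemma entry_prod_nonneg {n : ℕ} {V U : Matrix (Fin n) (Fin n) ℝ}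
    (h : ∀ B : Matrix (Fin n) (Fin n) ℝ, IsUnit B → (∀ i j, 0 ≤ B i j) →
      ∀ k l, 0 ≤ (V * B * U) k l) :
    ∀ i j k l, 0 ≤ V k i * U j l := by
  intro i j k l
  by_contra hc
  push_neg at hc
  set c := V k i * U j l with hcdef
  have hw : 0 ≤ (V * U) k l := by
    have := h 1 isUnit_one (fun a b => by
      simp only [Matrix.one_apply]; split <;> norm_num) k l
    simpa using this
  set w := (V * U) k l with hwdef
  set t := (w + 1) / (-c) with htdef
  have hcneg : -c > 0 := by linarith
  have ht : 0 ≤ t := by positivity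
  have := h (1 + Matrix.single i j t) (std_isUnit i j t ht)
    (std_nonneg i j t ht) k l
  rw [VEU] at this
  have htc : t * c = -(w + 1) := by
    rw [htdef, div_mul_eq_mul_div, div_eq_iff hcneg.ne']
    ring
  rw [← hcdef, ← hwdef, htc] at this
  linarith

lemma dichotomy {n : ℕ} {U V : Matrix (Fin n) (Fin n) ℝ}
    (h : ∀ i j k l, 0 ≤ V k i * U j l)
    (hU : ∃ a b, U a b ≠ 0) (hV : ∃ a b, V a b ≠ 0) :
    ((∀ i j, 0 ≤ U i j) ∧ (∀ i j, 0 ≤ V i j)) ∨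
      ((∀ i j, U i j ≤ 0) ∧ (∀ i j, V i j ≤ 0)) := by
  obtain ⟨a, b, hab⟩ := hU
  rcases lt_or_gt_of_ne hab with hneg | hpos
  · -- U a b < 0 : all V ≤ 0, then all U ≤ 0
    right
    have hVle : ∀ i j, V i j ≤ 0 := by
      intro i j
      nlinarith [h j a i b]
    refine ⟨?_, hVle⟩
    obtain ⟨c, d, hcd⟩ := hV
    have hVneg : V c d < 0 := lt_of_le_of_ne (hVle c d) hcd
    intro i j
    nlinarith [h d i c j]
  · left
    have hVge : ∀ i j, 0 ≤ V i j := by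
      intro i j
      nlinarith [h j a i b]
    refine ⟨?_, hVge⟩
    obtain ⟨c, d, hcd⟩ := hV
    have hVpos : 0 < V c d := lt_of_le_of_ne (hVge c d) (Ne.symm hcd)
    intro i j
    nlinarith [h d i c j]

lemma exists_ne_zero_of_isUnit {n : ℕ} {M : Matrix (Fin n) (Fin n) ℝ}
    (hU : IsUnit M) (hn : 0 < n) : ∃ a b, M a b ≠ 0 := by
  by_contra h
  push_neg at h
  have hdet : IsUnit M.det := (Matrix.isUnit_iff_isUnit_det M).mp hU
  have h1 := Matrix.nonsing_inv_mul M hdet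
  have z : Fin n := ⟨0, hn⟩
  have := congrFun (congrFun h1 z) z
  rw [Matrix.mul_apply, Matrix.one_apply_eq] at this
  simp [h] at this

lemma sandwich {n : ℕ} {P Q : Matrix (Fin n) (Fin n) ℝ}
    (hP : IsUnit P.det) (hQ : IsUnit Q.det) (M : Matrix (Fin n) (Fin n) ℝ) :
    P⁻¹ * (P * M * Q) * Q⁻¹ = M := by
  rw [Matrix.mul_assoc P M Q, ← Matrix.mul_assoc P⁻¹, Matrix.nonsing_inv_mul _ hP,
    Matrix.one_mul, Matrix.mul_assoc, Matrix.mul_nonsing_inv _ hQ, Matrix.mul_one]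

lemma sandwich' {n : ℕ} {P Q : Matrix (Fin n) (Fin n) ℝ}
    (hP : IsUnit P.det) (hQ : IsUnit Q.det) (M : Matrix (Fin n) (Fin n) ℝ) :
    P * (P⁻¹ * M * Q⁻¹) * Q = M := by
  have h := sandwich (P := P⁻¹) (Q := Q⁻¹)
    (Matrix.isUnit_nonsing_inv_det _ hP) (Matrix.isUnit_nonsing_inv_det _ hQ) M
  rw [Matrix.nonsing_inv_nonsing_inv _ hP, Matrix.nonsing_inv_nonsing_inv _ hQ] at h
  exact h

lemma mulNonnegNonpos {n : ℕ} {A B : Matrix (Fin n) (Fin n) ℝ}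
    (hA : ∀ i j, 0 ≤ A i j) (hB : ∀ i j, B i j ≤ 0) : ∀ i j, (A * B) i j ≤ 0 := by
  intro i j
  rw [Matrix.mul_apply]
  exact Finset.sum_nonpos fun k _ => mul_nonpos_of_nonneg_of_nonpos (hA i k) (hB k j)

lemma mulNonposNonneg {n : ℕ} {A B : Matrix (Fin n) (Fin n) ℝ}
    (hA : ∀ i j, A i j ≤ 0) (hB : ∀ i j, 0 ≤ B i j) : ∀ i j, (A * B) i j ≤ 0 := by
  intro i j
  rw [Matrix.mul_apply]
  exact Finset.sum_nonpos fun k _ => mul_nonpos_of_nonpos_of_nonneg (hA i k) (hB k j)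

lemma bijOn_of_monomial {n : ℕ} {X Y : Matrix (Fin n) (Fin n) ℝ}
    (hX : Monomial X) (hY : Monomial Y) :
    Set.BijOn (fun A => X * A * Y) {A | InvNonneg A} {A | InvNonneg A} := by
  obtain ⟨hXU, hXinv⟩ := monomial_isUnit_inv hX
  obtain ⟨hYU, hYinv⟩ := monomial_isUnit_inv hY
  have hXdet : IsUnit X.det := (Matrix.isUnit_iff_isUnit_det X).mp hXU
  have hYdet : IsUnit Y.det := (Matrix.isUnit_iff_isUnit_det Y).mp hYU
  have hXpos : ∀ i j, 0 ≤ X i j := hX.1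
  have hYpos : ∀ i j, 0 ≤ Y i j := hY.1
  refine ⟨?_, ?_, ?_⟩
  · intro A hA
    obtain ⟨hAU, hAinv⟩ := hA
    refine ⟨(hXU.mul hAU).mul hYU, ?_⟩
    have : (X * A * Y)⁻¹ = Y⁻¹ * A⁻¹ * X⁻¹ := by
      rw [Matrix.mul_inv_rev, Matrix.mul_inv_rev, Matrix.mul_assoc]
    rw [this]
    exact mulNonneg (mulNonneg hYinv hAinv) hXinv
  · intro A _ B _ h
    simp only at h
    have := congrArg (fun M => X⁻¹ * M * Y⁻¹) h
    simpa [sandwich hXdet hYdet] using this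
  · intro C hC
    obtain ⟨hCU, hCinv⟩ := hC
    refine ⟨X⁻¹ * C * Y⁻¹, ?_, ?_⟩
    · refine ⟨((Matrix.isUnit_nonsing_inv_iff.mpr hXU).mul hCU).mul
        (Matrix.isUnit_nonsing_inv_iff.mpr hYU), ?_⟩
      have : (X⁻¹ * C * Y⁻¹)⁻¹ = Y * C⁻¹ * X := by
        rw [Matrix.mul_inv_rev, Matrix.mul_inv_rev, Matrix.mul_assoc,
          Matrix.nonsing_inv_nonsing_inv _ hXdet, Matrix.nonsing_inv_nonsing_inv _ hYdet]
      rw [this]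
      exact mulNonneg (mulNonneg hYpos hCinv) hXpos
    · simpa using sandwich' hXdet hYdet C

theorem stmt8 (n : ℕ) (X Y : Matrix (Fin n) (Fin n) ℝ) :
    Set.BijOn (fun A => X * A * Y) {A | InvNonneg A} {A | InvNonneg A} ↔
      (Monomial X ∧ Monomial Y) ∨ (Monomial (-X) ∧ Monomial (-Y)) := by
  constructor
  · intro hbij
    rcases Nat.eq_zero_or_pos n with hn | hn
    · subst hn
      left
      exact ⟨⟨fun i => i.elim0, fun i => i.elim0, fun j => j.elim0⟩,
        ⟨fun i => i.elim0, fun i => i.elim0, fun j => j.elim0⟩⟩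
    have h1 : InvNonneg (1 : Matrix (Fin n) (Fin n) ℝ) := by
      refine ⟨isUnit_one, ?_⟩
      intro i j
      have hone : (1 : Matrix (Fin n) (Fin n) ℝ)⁻¹ = 1 :=
        Matrix.inv_eq_right_inv (Matrix.one_mul 1)
      rw [hone]
      simp only [Matrix.one_apply]
      split <;> norm_num
    have hmaps := hbij.mapsTo
    have hsurj := hbij.surjOn
    have hXY : InvNonneg (X * Y) := by
      have := hmaps h1
      simpa using this
    have hXYdet : IsUnit (X * Y).det := (Matrix.isUnit_iff_isUnit_det _).mp hXY.1
    rw [Matrix.det_mul] at hXYdet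
    have hXdet : IsUnit X.det := isUnit_of_mul_isUnit_left hXYdet
    have hYdet : IsUnit Y.det := isUnit_of_mul_isUnit_right hXYdet
    have hXU : IsUnit X := (Matrix.isUnit_iff_isUnit_det X).mpr hXdet
    have hYU : IsUnit Y := (Matrix.isUnit_iff_isUnit_det Y).mpr hYdet
    -- P1
    have P1 : ∀ B : Matrix (Fin n) (Fin n) ℝ, IsUnit B → (∀ i j, 0 ≤ B i j) →
        ∀ k l, 0 ≤ (Y⁻¹ * B * X⁻¹) k l := by
      intro B hB hBpos k l
      have hBdet : IsUnit B.det := (Matrix.isUnit_iff_isUnit_det B).mp hB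
      have hA : InvNonneg B⁻¹ := by
        refine ⟨Matrix.isUnit_nonsing_inv_iff.mpr hB, ?_⟩
        rw [Matrix.nonsing_inv_nonsing_inv _ hBdet]
        exact hBpos
      have := (hmaps hA).2 k l
      have heq : (X * B⁻¹ * Y)⁻¹ = Y⁻¹ * B * X⁻¹ := by
        rw [Matrix.mul_inv_rev, Matrix.mul_inv_rev,
          Matrix.nonsing_inv_nonsing_inv _ hBdet, Matrix.mul_assoc]
      rw [heq] at this
      exact this
    -- P2
    have P2 : ∀ C : Matrix (Fin n) (Fin n) ℝ, IsUnit C → (∀ i j, 0 ≤ C i j) →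
        ∀ k l, 0 ≤ (Y * C * X) k l := by
      intro C hC hCpos k l
      have hCdet : IsUnit C.det := (Matrix.isUnit_iff_isUnit_det C).mp hC
      have hA : InvNonneg C⁻¹ := by
        refine ⟨Matrix.isUnit_nonsing_inv_iff.mpr hC, ?_⟩
        rw [Matrix.nonsing_inv_nonsing_inv _ hCdet]
        exact hCpos
      obtain ⟨A', hA', hEq⟩ := hsurj hA
      simp only at hEq
      -- hEq : X * A' * Y = C⁻¹
      have hinv : A'⁻¹ = Y * C * X := by
        have h2 : (X * A' * Y)⁻¹ = C := by
          rw [hEq, Matrix.nonsing_inv_nonsing_inv _ hCdet]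
        rw [Matrix.mul_inv_rev, Matrix.mul_inv_rev] at h2
        calc A'⁻¹ = Y * (Y⁻¹ * (A'⁻¹ * X⁻¹)) * X := by
              rw [← Matrix.mul_assoc Y Y⁻¹, Matrix.mul_nonsing_inv _ hYdet,
                Matrix.one_mul, Matrix.mul_assoc A'⁻¹, Matrix.nonsing_inv_mul _ hXdet,
                Matrix.mul_one]
          _ = Y * C * X := by rw [h2]
      have := hA'.2 k l
      rw [hinv] at this
      exact this
    have hP1 := entry_prod_nonneg (V := Y⁻¹) (U := X⁻¹) P1
    have hP2 := entry_prod_nonneg (V := Y) (U := X) P2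
    have hXne := exists_ne_zero_of_isUnit hXU hn
    have hYne := exists_ne_zero_of_isUnit hYU hn
    have hXine := exists_ne_zero_of_isUnit (Matrix.isUnit_nonsing_inv_iff.mpr hXU) hn
    have hYine := exists_ne_zero_of_isUnit (Matrix.isUnit_nonsing_inv_iff.mpr hYU) hn
    have hD2 := dichotomy hP2 hXne hYne
    have hD1 := dichotomy hP1 hXine hYine
    have hXXinv : X * X⁻¹ = 1 := Matrix.mul_nonsing_inv _ hXdet
    have hYYinv : Y * Y⁻¹ = 1 := Matrix.mul_nonsing_inv _ hYdet
    have z : Fin n := ⟨0, hn⟩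
    rcases hD2 with ⟨hXpos, hYpos⟩ | ⟨hXneg, hYneg⟩
    · left
      rcases hD1 with ⟨hXipos, hYipos⟩ | ⟨hXineg, hYineg⟩
      · exact ⟨monomial_of_nonneg_inv hXpos hXU hXipos,
          monomial_of_nonneg_inv hYpos hYU hYipos⟩
      · exfalso
        have := mulNonnegNonpos hXpos hXineg z z
        rw [hXXinv, Matrix.one_apply_eq] at this
        linarith
    · right
      rcases hD1 with ⟨hXipos, hYipos⟩ | ⟨hXineg, hYineg⟩
      · exfalso
        have := mulNonposNonneg hXneg hXipos z z
        rw [hXXinv, Matrix.one_apply_eq] at this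
        linarith
      · have hnXinv : (-X)⁻¹ = -(X⁻¹) := by
          apply Matrix.inv_eq_right_inv
          rw [Matrix.neg_mul, Matrix.mul_neg, neg_neg, hXXinv]
        have hnYinv : (-Y)⁻¹ = -(Y⁻¹) := by
          apply Matrix.inv_eq_right_inv
          rw [Matrix.neg_mul, Matrix.mul_neg, neg_neg, hYYinv]
        have hnXU : IsUnit (-X) := hXU.neg
        have hnYU : IsUnit (-Y) := hYU.neg
        refine ⟨monomial_of_nonneg_inv ?_ hnXU ?_, monomial_of_nonneg_inv ?_ hnYU ?_⟩
        · intro i j; simp only [Matrix.neg_apply]; linarith [hXneg i j]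
        · intro i j; rw [hnXinv]; simp only [Matrix.neg_apply]; linarith [hXineg i j]
        · intro i j; simp only [Matrix.neg_apply]; linarith [hYneg i j]
        · intro i j; rw [hnYinv]; simp only [Matrix.neg_apply]; linarith [hYineg i j]
  · rintro (⟨hX, hY⟩ | ⟨hX, hY⟩)
    · exact bijOn_of_monomial hX hY
    · have heq : (fun A => X * A * Y) = (fun A : Matrix (Fin n) (Fin n) ℝ => -X * A * -Y) := by
        funext A
        simp [Matrix.neg_mul, Matrix.mul_neg]
      rw [heq]
      exact bijOn_of_monomial hX hY
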